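/- Let H = ℓ²(ℕ, ℂ), let S ∈ B(H) be the backward shift, i.e., (Sx)(n) = x(n+1) for all x ∈ H and n ∈ ℕ, and let P ∈ B(H) be the operator (Px)(0) = 0 and (Px)(n) = x(n) for n ≥ 1. Then: (a) P is self-adjoint, P² = P = S*S (so P = |S| is the modulus in the polar decomposition of S, and S = S∘P, making P∘S∘P the Aluthge transform of S); (b) S is surjective; (c) P∘S∘P is not surjective. In particular, surjectivity is not preserved by the Aluthge transform (Remark (iii): the right spectral systems are not invariant). -/

import Mathlib

open scoped ComplexConjugate

/-- On `H = ℓ²(ℕ, ℂ)`, let `S` be the backward shift (`(Sx)(n) = x(n+1)`)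
and `P` the operator with `(Px)(0) = 0`, `(Px)(n) = x(n)` for `n ≥ 1`. Then
(a) `P` is self-adjoint, `P² = P = S*S` (so `P = |S|` and `S = S∘P`, making `P∘S∘P` the
Aluthge transform of `S`); (b) `S` is surjective; (c) `P∘S∘P` is not surjective. -/
theorem aluthge_backward_shift_not_surjective
    (S P : lp (fun _ : ℕ => ℂ) 2 →L[ℂ] lp (fun _ : ℕ => ℂ) 2)
    (hS : ∀ (x : lp (fun _ : ℕ => ℂ) 2) (n : ℕ), S x n = x (n + 1))
    (hP0 : ∀ x : lp (fun _ : ℕ => ℂ) 2, P x 0 = 0)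
    (hP1 : ∀ (x : lp (fun _ : ℕ => ℂ) 2) (n : ℕ), 1 ≤ n → P x n = x n) :
    (IsSelfAdjoint P ∧ P * P = P ∧ P = ContinuousLinearMap.adjoint S * S ∧ S = S * P) ∧
    Function.Surjective S ∧
    ¬ Function.Surjective (P * S * P) := by
  have hPapply : ∀ (x : lp (fun _ : ℕ => ℂ) 2) (n : ℕ),
      P x n = if n = 0 then 0 else x n := by
    intro x n
    cases n with
    | zero => simp [hP0]
    | succ m => simp [hP1 x (m + 1) (Nat.succ_le_succ (Nat.zero_le m))]
  -- key inner product computation: ⟪x, P y⟫ = ∑' n, conj (x (n+1)) * y (n+1)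
  have hinner : ∀ x y : lp (fun _ : ℕ => ℂ) 2,
      (inner ℂ x (P y) : ℂ) = ∑' n : ℕ, conj (x (n + 1)) * y (n + 1) := by
    intro x y
    rw [lp.inner_eq_tsum]
    have hbij : Function.Injective (fun n : ℕ => n + 1) := fun a b h => by
      simpa using h
    rw [← Function.Injective.tsum_eq hbij (f := fun n : ℕ => (inner ℂ (x n) (P y n) : ℂ))]
    · refine tsum_congr fun n => ?_
      simp [RCLike.inner_apply, hPapply, mul_comm]
    · intro n hn
      rcases n with _ | m
      · exact absurd (by simp [RCLike.inner_apply, hP0]) hn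
      · exact ⟨m, rfl⟩
  have hSinner : ∀ x y : lp (fun _ : ℕ => ℂ) 2,
      (inner ℂ (S x) (S y) : ℂ) = ∑' n : ℕ, conj (x (n + 1)) * y (n + 1) := by
    intro x y
    rw [lp.inner_eq_tsum]
    refine tsum_congr fun n => ?_
    simp [RCLike.inner_apply, hS, mul_comm]
  have hPSS : P = ContinuousLinearMap.adjoint S * S := by
    refine ContinuousLinearMap.ext fun y => ?_
    refine ext_inner_left ℂ fun x => ?_
    rw [ContinuousLinearMap.mul_apply, ContinuousLinearMap.adjoint_inner_right,
      hSinner, hinner]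
  have hPsa : IsSelfAdjoint P := by
    rw [hPSS, ← ContinuousLinearMap.star_eq_adjoint]
    exact IsSelfAdjoint.star_mul_self S
  have hPP : P * P = P := by
    refine ContinuousLinearMap.ext fun x => ?_
    ext n
    simp only [ContinuousLinearMap.mul_apply, hPapply]
    split <;> simp
  have hSP : S = S * P := by
    refine ContinuousLinearMap.ext fun x => ?_
    ext n
    rw [ContinuousLinearMap.mul_apply, hS, hS, hP1 x (n + 1) (Nat.succ_le_succ (Nat.zero_le n))]
  refine ⟨⟨hPsa, hPP, hPSS, hSP⟩, ?_, ?_⟩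
  · -- surjectivity of S
    intro y
    set g : ℕ → ℂ := fun n => if n = 0 then 0 else y (n - 1) with hg
    have hmem : Memℓp g 2 := by
      have hy : Memℓp (fun n => y n) 2 := y.2
      rw [memℓp_gen_iff (by norm_num)] at hy ⊢
      rw [← summable_nat_add_iff 1]
      convert hy using 2
      · rfl
      · simp [hg]
    refine ⟨⟨g, hmem⟩, ?_⟩
    ext n
    rw [hS]
    simp [hg]
  · -- non-surjectivity of P * S * P
    intro hsurj
    obtain ⟨x, hx⟩ := hsurj (lp.single 2 0 1)
    have h0 : (P * S * P) x 0 = 0 := by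
      rw [ContinuousLinearMap.mul_apply, ContinuousLinearMap.mul_apply, hP0]
    rw [hx] at h0
    simp [lp.single_apply] at h0
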